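/- Let A be an n×n real matrix with ⊞-determinant |A|_∞ ≠ 0 and let b ∈ ℝ^n. Then there exists p₀ such that for all p ≥ p₀ the entrywise (2p+1)-power matrix Φ_p(A) is invertible, the system Φ_p(A)·φ_p(x) = φ_p(b) has the unique solution x^{(p)} with x^{(p)}_i = (|Φ_p(A^{(i)})| / |Φ_p(A)|)^{1/(2p+1)} (real odd root), where A^{(i)} is A with column i replaced by b; and lim_{p→∞} x^{(p)}_i = |A^{(i)}|_∞ / |A|_∞ for every i. -/

import Mathlib

open scoped Classical

/-- ξ_I[x](α): signed count of occurrences of α among the x i, i ∈ I. -/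
noncomputable def xiF {ι : Type*} (I : Finset ι) (x : ι → ℝ) (α : ℝ) : ℤ :=
  ((I.filter fun i => x i = α).card : ℤ) - ((I.filter fun i => x i = -α).card : ℤ)

/-- the n-ary limit operation F_I, i.e. ⊞_{i∈I} x_i. -/
noncomputable def FF {ι : Type*} (I : Finset ι) (x : ι → ℝ) : ℝ :=
  if h : (I.filter fun j => xiF I x (x j) ≠ 0).Nonempty then
    if 0 < xiF I x ((I.filter fun j => xiF I x (x j) ≠ 0).sup' h fun i => |x i|) then
      (I.filter fun j => xiF I x (x j) ≠ 0).sup' h x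
    else if xiF I x ((I.filter fun j => xiF I x (x j) ≠ 0).sup' h fun i => |x i|) < 0 then
      (I.filter fun j => xiF I x (x j) ≠ 0).inf' h x
    else 0
  else 0

/-- determinant in limit -/
noncomputable def detInf {n : ℕ} (A : Matrix (Fin n) (Fin n) ℝ) : ℝ :=
  FF Finset.univ fun σ : Equiv.Perm (Fin n) =>
    ((Equiv.Perm.sign σ : ℤ) : ℝ) * ∏ i, A i (σ i)

/-- the unique real (2p+1)-th root -/
noncomputable def oddRoot (p : ℕ) (t : ℝ) : ℝ :=
  if 0 ≤ t then t ^ ((2 * (p : ℝ) + 1)⁻¹) else -((-t) ^ ((2 * (p : ℝ) + 1)⁻¹))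

/-- entrywise (2p+1)-th power of a vector -/
noncomputable def phiV (p : ℕ) {n : ℕ} (x : Fin n → ℝ) : Fin n → ℝ :=
  fun i => x i ^ (2 * p + 1)

/-- entrywise (2p+1)-th Hadamard power of a matrix -/
noncomputable def PhiM (p : ℕ) {n : ℕ} (A : Matrix (Fin n) (Fin n) ℝ) :
    Matrix (Fin n) (Fin n) ℝ :=
  Matrix.of fun i j => A i j ^ (2 * p + 1)

lemma xiF_neg {ι : Type*} (I : Finset ι) (x : ι → ℝ) (α : ℝ) :
    xiF I x (-α) = - xiF I x α := by simp [xiF]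

lemma xiF_zero {ι : Type*} (I : Finset ι) (x : ι → ℝ) : xiF I x 0 = 0 := by simp [xiF]

lemma xiF_abs_ne_zero {ι : Type*} {I : Finset ι} {x : ι → ℝ} {i : ι}
    (h : xiF I x (x i) ≠ 0) : xiF I x |x i| ≠ 0 := by
  rcases abs_choice (x i) with h1 | h1 <;> rw [h1]
  · exact h
  · rw [xiF_neg]; simpa using h

lemma xiF_of_abs_ne_zero {ι : Type*} {I : Finset ι} {x : ι → ℝ} {i : ι}
    (h : xiF I x |x i| ≠ 0) : xiF I x (x i) ≠ 0 := by
  rcases abs_choice (x i) with h1 | h1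
  · rwa [h1] at h
  · rw [h1, xiF_neg] at h; simpa using h

lemma sum_odd_pow_eq {ι : Type*} (I : Finset ι) (x : ι → ℝ) (p : ℕ) :
    ∑ i ∈ I, x i ^ (2*p+1) =
    ∑ α ∈ (I.filter fun i => x i ≠ 0).image (fun i => |x i|),
      (xiF I x α : ℝ) * α ^ (2*p+1) := by
  have hodd : Odd (2*p+1) := ⟨p, by ring⟩
  rw [← Finset.sum_filter_of_ne (p := fun i => x i ≠ 0)
      (by intro i _ h hx; exact h (by rw [hx]; simp))]
  rw [← Finset.sum_fiberwise_of_maps_to (g := fun i => |x i|)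
      (fun i hi => Finset.mem_image_of_mem (fun i => |x i|) hi)]
  refine Finset.sum_congr rfl fun α hα => ?_
  obtain ⟨i₀, hi₀, rfl⟩ := Finset.mem_image.mp hα
  have hx₀ : x i₀ ≠ 0 := (Finset.mem_filter.mp hi₀).2
  set α := |x i₀| with hαdef
  have hαpos : 0 < α := abs_pos.mpr hx₀
  have hsplit : (I.filter fun i => x i ≠ 0).filter (fun i => |x i| = α)
      = (I.filter fun i => x i = α) ∪ (I.filter fun i => x i = -α) := by
    ext j
    simp only [Finset.mem_filter, Finset.mem_union]
    constructor
    · rintro ⟨⟨hj, hxj⟩, habs⟩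
      rcases abs_choice (x j) with h1 | h1
      · exact Or.inl ⟨hj, by rw [← h1, habs]⟩
      · exact Or.inr ⟨hj, by rw [← habs, h1, neg_neg]⟩
    · rintro (⟨hj, hxj⟩ | ⟨hj, hxj⟩)
      · exact ⟨⟨hj, by rw [hxj]; exact hαpos.ne'⟩, by rw [hxj, abs_of_pos hαpos]⟩
      · exact ⟨⟨hj, by rw [hxj]; simpa using hαpos.ne'⟩, by rw [hxj, abs_neg, abs_of_pos hαpos]⟩
  have hdisj : Disjoint (I.filter fun i => x i = α) (I.filter fun i => x i = -α) := by
    rw [Finset.disjoint_left]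
    intro j hj1 hj2
    have e1 := (Finset.mem_filter.mp hj1).2
    have e2 := (Finset.mem_filter.mp hj2).2
    rw [e1] at e2
    linarith
  rw [hsplit, Finset.sum_union hdisj]
  have h1 : ∑ j ∈ I.filter (fun i => x i = α), x j ^ (2*p+1)
      = ((I.filter fun i => x i = α).card : ℝ) * α ^ (2*p+1) := by
    rw [Finset.sum_congr rfl (fun j hj => by rw [(Finset.mem_filter.mp hj).2]),
      Finset.sum_const, nsmul_eq_mul]
  have h2 : ∑ j ∈ I.filter (fun i => x i = -α), x j ^ (2*p+1)
      = -(((I.filter fun i => x i = -α).card : ℝ) * α ^ (2*p+1)) := by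
    rw [Finset.sum_congr rfl (fun j hj => by rw [(Finset.mem_filter.mp hj).2]),
      Finset.sum_const, nsmul_eq_mul, hodd.neg_pow]
    ring
  rw [h1, h2, xiF]
  push_cast
  ring

lemma FF_zero' {ι : Type*} (I : Finset ι) (x : ι → ℝ)
    (h : ¬ (I.filter fun j => xiF I x (x j) ≠ 0).Nonempty) :
    FF I x = 0 ∧ ∀ p : ℕ, ∑ i ∈ I, x i ^ (2*p+1) = 0 := by
  constructor
  · rw [FF, dif_neg h]
  · intro p
    rw [sum_odd_pow_eq]
    apply Finset.sum_eq_zero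
    intro α hα
    obtain ⟨i, hi, rfl⟩ := Finset.mem_image.mp hα
    have hiI : i ∈ I := (Finset.mem_filter.mp hi).1
    have h0 : xiF I x |x i| = 0 := by
      by_contra hc
      exact h ⟨i, Finset.mem_filter.mpr ⟨hiI, xiF_of_abs_ne_zero hc⟩⟩
    rw [h0]; simp

lemma FF_spec {ι : Type*} (I : Finset ι) (x : ι → ℝ)
    (hS : (I.filter fun j => xiF I x (x j) ≠ 0).Nonempty) :
    FF I x ≠ 0 ∧ ∃ L : ℝ, 0 < L ∧
      Filter.Tendsto (fun p : ℕ => (∑ i ∈ I, x i ^ (2*p+1)) / (FF I x)^(2*p+1))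
        Filter.atTop (nhds L) := by
  set S := I.filter fun j => xiF I x (x j) ≠ 0 with hSdef
  set M := S.sup' hS fun i => |x i| with hMdef
  have hmem : ∀ i ∈ S, i ∈ I ∧ xiF I x (x i) ≠ 0 := fun i hi => Finset.mem_filter.mp hi
  have hxne : ∀ i ∈ S, x i ≠ 0 := by
    intro i hi hx0
    have := (hmem i hi).2
    rw [hx0, xiF_zero] at this; exact this rfl
  have habsle : ∀ i ∈ S, |x i| ≤ M := by
    intro i hi
    rw [hMdef]
    exact Finset.le_sup' (fun i => |x i|) hi
  have hMpos : 0 < M := by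
    obtain ⟨i₀, hi₀⟩ := hS
    exact lt_of_lt_of_le (abs_pos.mpr (hxne i₀ hi₀)) (habsle i₀ hi₀)
  obtain ⟨iM, hiM, hMeq⟩ := Finset.exists_mem_eq_sup' hS fun i => |x i|
  rw [← hMdef] at hMeq
  have hξM : xiF I x M ≠ 0 := by
    have := xiF_abs_ne_zero (hmem iM hiM).2
    rwa [← hMeq] at this
  have hexists_pos : 0 < xiF I x M → ∃ i ∈ S, x i = M := by
    intro hpos
    have hcard : 0 < (I.filter fun i => x i = M).card := by
      rw [xiF] at hpos; omega
    obtain ⟨i, hi⟩ := Finset.card_pos.mp hcard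
    have hiI := (Finset.mem_filter.mp hi).1
    have hxi := (Finset.mem_filter.mp hi).2
    exact ⟨i, Finset.mem_filter.mpr ⟨hiI, by rw [hxi]; exact hξM⟩, hxi⟩
  have hexists_neg : xiF I x M < 0 → ∃ i ∈ S, x i = -M := by
    intro hneg
    have hcard : 0 < (I.filter fun i => x i = -M).card := by
      rw [xiF] at hneg; omega
    obtain ⟨i, hi⟩ := Finset.card_pos.mp hcard
    have hiI := (Finset.mem_filter.mp hi).1
    have hxi := (Finset.mem_filter.mp hi).2
    refine ⟨i, Finset.mem_filter.mpr ⟨hiI, ?_⟩, hxi⟩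
    rw [hxi, xiF_neg]
    simpa using hξM
  have hFFcase : (0 < xiF I x M ∧ FF I x = M) ∨ (xiF I x M < 0 ∧ FF I x = -M) := by
    rcases lt_or_gt_of_ne hξM with hlt | hgt
    · right
      refine ⟨hlt, ?_⟩
      rw [FF]
      simp only [← hSdef]
      rw [dif_pos hS]
      simp only [← hMdef]
      rw [if_neg (by omega), if_pos hlt]
      obtain ⟨i, hiS, hxi⟩ := hexists_neg hlt
      apply le_antisymm
      · exact le_of_le_of_eq (Finset.inf'_le _ hiS) hxi
      · exact Finset.le_inf' _ _ fun j hj => (abs_le.mp (habsle j hj)).1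
    · left
      refine ⟨hgt, ?_⟩
      rw [FF]
      simp only [← hSdef]
      rw [dif_pos hS]
      simp only [← hMdef]
      rw [if_pos hgt]
      obtain ⟨i, hiS, hxi⟩ := hexists_pos hgt
      apply le_antisymm
      · exact Finset.sup'_le _ _ fun j hj => (abs_le.mp (habsle j hj)).2
      · exact le_of_eq_of_le hxi.symm (Finset.le_sup' _ hiS)
  set T := (I.filter fun i => x i ≠ 0).image (fun i => |x i|) with hTdef
  have hMT : M ∈ T := by
    rw [hTdef]
    apply Finset.mem_image.mpr
    exact ⟨iM, Finset.mem_filter.mpr ⟨(hmem iM hiM).1, hxne iM hiM⟩, hMeq.symm⟩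
  have key : ∀ p : ℕ, (∑ i ∈ I, x i ^ (2*p+1))
      = (xiF I x M : ℝ) * M^(2*p+1) + ∑ α ∈ T.erase M, (xiF I x α : ℝ) * α^(2*p+1) := by
    intro p
    rw [sum_odd_pow_eq]
    rw [← hTdef]
    rw [← Finset.add_sum_erase _ _ hMT]
  have hrem : Filter.Tendsto
      (fun p : ℕ => ∑ α ∈ T.erase M, (xiF I x α : ℝ) * α^(2*p+1) / M^(2*p+1))
      Filter.atTop (nhds 0) := by
    have hterm : ∀ α ∈ T.erase M, Filter.Tendsto
        (fun p : ℕ => (xiF I x α : ℝ) * α^(2*p+1) / M^(2*p+1)) Filter.atTop (nhds 0) := ?_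
    · simpa using tendsto_finset_sum (T.erase M) hterm
    intro α hα
    obtain ⟨hne, hαT⟩ := Finset.mem_erase.mp hα
    obtain ⟨i, hi, rfl⟩ := Finset.mem_image.mp hαT
    have hiI : i ∈ I := (Finset.mem_filter.mp hi).1
    by_cases hξα : xiF I x |x i| = 0
    · simp only [hξα, Int.cast_zero, zero_mul, zero_div]
      exact tendsto_const_nhds
    · have hiS : i ∈ S := Finset.mem_filter.mpr ⟨hiI, xiF_of_abs_ne_zero hξα⟩
      have hlt : |x i| < M := lt_of_le_of_ne (habsle i hiS) hne
      have h01 : |(|x i| / M)| < 1 := by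
        rw [abs_div, abs_abs, abs_of_pos hMpos, div_lt_one hMpos]
        exact hlt
      have hpow : Filter.Tendsto (fun p : ℕ => (|x i| / M)^(2*p+1)) Filter.atTop (nhds 0) := by
        refine (tendsto_pow_atTop_nhds_zero_of_abs_lt_one h01).comp ?_
        exact Filter.tendsto_atTop_mono (fun p => by simp only [id_eq]; omega) Filter.tendsto_id
      have heq : ∀ p : ℕ, (xiF I x |x i| : ℝ) * |x i|^(2*p+1) / M^(2*p+1)
          = (xiF I x |x i| : ℝ) * (|x i| / M)^(2*p+1) := by
        intro p
        rw [div_pow, mul_div_assoc]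
      rw [funext heq]
      simpa using hpow.const_mul ((xiF I x |x i| : ℝ))
  have hMpow : ∀ p : ℕ, (M:ℝ)^(2*p+1) ≠ 0 := fun p => pow_ne_zero _ hMpos.ne'
  rcases hFFcase with ⟨hpos, hFF⟩ | ⟨hneg, hFF⟩
  · refine ⟨by rw [hFF]; exact hMpos.ne', (xiF I x M : ℝ), by exact_mod_cast hpos, ?_⟩
    have heq : ∀ p : ℕ, (∑ i ∈ I, x i ^ (2*p+1)) / (FF I x)^(2*p+1)
        = (xiF I x M : ℝ) + ∑ α ∈ T.erase M, (xiF I x α : ℝ) * α^(2*p+1) / M^(2*p+1) := by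
      intro p
      rw [hFF, key p, add_div, mul_div_cancel_right₀ _ (hMpow p), Finset.sum_div]
    rw [funext heq]
    simpa using tendsto_const_nhds.add hrem
  · refine ⟨by rw [hFF]; exact (neg_ne_zero.mpr hMpos.ne'), -(xiF I x M : ℝ), by
      rw [neg_pos]; exact_mod_cast hneg, ?_⟩
    have hodd : ∀ p : ℕ, Odd (2*p+1) := fun p => ⟨p, by ring⟩
    have heq : ∀ p : ℕ, (∑ i ∈ I, x i ^ (2*p+1)) / (FF I x)^(2*p+1)
        = -(xiF I x M : ℝ) + -(∑ α ∈ T.erase M, (xiF I x α : ℝ) * α^(2*p+1) / M^(2*p+1)) := by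
      intro p
      rw [hFF, (hodd p).neg_pow, div_neg, key p, add_div,
        mul_div_cancel_right₀ _ (hMpow p), Finset.sum_div]
      ring
    rw [funext heq]
    simpa using tendsto_const_nhds.add hrem.neg

lemma det_eq_sum_perm {n : ℕ} (B : Matrix (Fin n) (Fin n) ℝ) :
    B.det = ∑ σ : Equiv.Perm (Fin n), ((Equiv.Perm.sign σ : ℤ) : ℝ) * ∏ i, B i (σ i) := by
  rw [← Matrix.det_transpose, Matrix.det_apply']
  simp [Matrix.transpose_apply]

lemma det_PhiM {n : ℕ} (p : ℕ) (B : Matrix (Fin n) (Fin n) ℝ) :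
    (PhiM p B).det = ∑ σ : Equiv.Perm (Fin n),
      (((Equiv.Perm.sign σ : ℤ) : ℝ) * ∏ i, B i (σ i)) ^ (2*p+1) := by
  rw [det_eq_sum_perm]
  refine Finset.sum_congr rfl fun σ _ => ?_
  rw [mul_pow, ← Finset.prod_pow]
  have hodd : Odd (2*p+1) := ⟨p, by ring⟩
  rcases Int.units_eq_one_or (Equiv.Perm.sign σ) with h | h <;> rw [h] <;>
    simp [PhiM, hodd.neg_one_pow]

lemma PhiM_updateColumn {n : ℕ} (p : ℕ) (A : Matrix (Fin n) (Fin n) ℝ) (b : Fin n → ℝ)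
    (i : Fin n) :
    PhiM p (A.updateCol i b) = (PhiM p A).updateCol i (phiV p b) := by
  ext j k
  by_cases h : k = i <;>
    simp [PhiM, phiV, Matrix.updateCol_apply, h]

lemma odd_2p1 (p : ℕ) : Odd (2*p+1) := ⟨p, by ring⟩

lemma oddRoot_pow (p : ℕ) (t : ℝ) : (oddRoot p t) ^ (2*p+1) = t := by
  have hc : (2*(p:ℝ)+1) = ((2*p+1 : ℕ) : ℝ) := by push_cast; ring
  rw [oddRoot]
  split_ifs with h
  · rw [hc, Real.rpow_inv_natCast_pow h (by omega)]
  · rw [(odd_2p1 p).neg_pow, hc, Real.rpow_inv_natCast_pow (by linarith) (by omega), neg_neg]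

lemma oddRoot_pow_self (p : ℕ) (x : ℝ) : oddRoot p (x ^ (2*p+1)) = x :=
  (Odd.strictMono_pow (R := ℝ) (odd_2p1 p)).injective (by rw [oddRoot_pow])

lemma cramer_part {n : ℕ} (p : ℕ) (A : Matrix (Fin n) (Fin n) ℝ) (b : Fin n → ℝ)
    (hD : (PhiM p A).det ≠ 0) :
    (PhiM p A).mulVec (phiV p (fun i =>
        oddRoot p ((PhiM p (A.updateCol i b)).det / (PhiM p A).det))) = phiV p b ∧
    ∀ y : Fin n → ℝ, (PhiM p A).mulVec (phiV p y) = phiV p b →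
      y = fun i => oddRoot p ((PhiM p (A.updateCol i b)).det / (PhiM p A).det) := by
  have hDi : ∀ i, (PhiM p (A.updateCol i b)).det
      = Matrix.cramer (PhiM p A) (phiV p b) i := by
    intro i
    rw [PhiM_updateColumn, Matrix.cramer_apply]
  have hphi : phiV p (fun i => oddRoot p ((PhiM p (A.updateCol i b)).det / (PhiM p A).det))
      = fun i => (PhiM p (A.updateCol i b)).det / (PhiM p A).det := by
    funext i
    exact oddRoot_pow p _
  have hu : (fun i => (PhiM p (A.updateCol i b)).det / (PhiM p A).det)
      = ((PhiM p A).det)⁻¹ • Matrix.cramer (PhiM p A) (phiV p b) := by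
    funext i
    rw [hDi]
    simp [div_eq_inv_mul]
  have hsolve : (PhiM p A).mulVec
      (fun i => (PhiM p (A.updateCol i b)).det / (PhiM p A).det) = phiV p b := by
    rw [hu, Matrix.mulVec_smul, Matrix.mulVec_cramer, smul_smul, inv_mul_cancel₀ hD, one_smul]
  refine ⟨by rw [hphi]; exact hsolve, ?_⟩
  intro y hy
  have hinj : Function.Injective ((PhiM p A).mulVec) :=
    Matrix.mulVec_injective_iff_isUnit.mpr
      ((Matrix.isUnit_iff_isUnit_det _).mpr (isUnit_iff_ne_zero.mpr hD))
  have := hinj (hy.trans hsolve.symm)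
  funext i
  have hyi : y i ^ (2*p+1) = (PhiM p (A.updateCol i b)).det / (PhiM p A).det :=
    congrFun this i
  rw [← oddRoot_pow_self p (y i), hyi]


lemma oddRoot_mul (p : ℕ) (s t : ℝ) : oddRoot p (s*t) = oddRoot p s * oddRoot p t :=
  (Odd.strictMono_pow (R := ℝ) (odd_2p1 p)).injective
    (by rw [oddRoot_pow, mul_pow, oddRoot_pow, oddRoot_pow])

lemma oddRoot_zero (p : ℕ) : oddRoot p 0 = 0 := by
  simp [oddRoot]
  rw [Real.zero_rpow (by positivity)]

theorem stmt_15 {n : ℕ} (A : Matrix (Fin n) (Fin n) ℝ) (b : Fin n → ℝ)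
    (hA : detInf A ≠ 0) :
    (∃ p₀ : ℕ, ∀ p ≥ p₀,
      (PhiM p A).det ≠ 0 ∧
      (PhiM p A).mulVec (phiV p (fun i =>
          oddRoot p ((PhiM p (A.updateCol i b)).det / (PhiM p A).det))) = phiV p b ∧
      ∀ y : Fin n → ℝ, (PhiM p A).mulVec (phiV p y) = phiV p b →
        y = fun i => oddRoot p ((PhiM p (A.updateCol i b)).det / (PhiM p A).det)) ∧
    ∀ i, Filter.Tendsto
      (fun p => oddRoot p ((PhiM p (A.updateCol i b)).det / (PhiM p A).det))
      Filter.atTop (nhds (detInf (A.updateCol i b) / detInf A)) := by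
  classical
  set zA : Equiv.Perm (Fin n) → ℝ :=
    fun σ => ((Equiv.Perm.sign σ : ℤ) : ℝ) * ∏ i, A i (σ i) with hzA
  have hdetA : detInf A = FF Finset.univ zA := by rw [hzA]; rfl
  have hDA : ∀ p : ℕ, (PhiM p A).det = ∑ σ ∈ Finset.univ, zA σ ^ (2*p+1) := by
    intro p; rw [hzA]; exact det_PhiM p A
  have hSA : (Finset.univ.filter fun σ => xiF Finset.univ zA (zA σ) ≠ 0).Nonempty := by
    by_contra h
    rw [hdetA] at hA
    exact hA ((FF_zero' _ _ h).1)
  obtain ⟨hvA_ne, LA, hLA, hTA⟩ := FF_spec Finset.univ zA hSA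
  have hDne : ∀ᶠ p in Filter.atTop, (PhiM p A).det ≠ 0 := by
    filter_upwards [hTA.eventually (eventually_gt_nhds (half_lt_self hLA))] with p hp h0
    rw [← hDA p] at hp
    rw [h0, zero_div] at hp
    linarith [half_pos hLA]
  constructor
  · obtain ⟨p₀, hp₀⟩ := Filter.eventually_atTop.mp hDne
    exact ⟨p₀, fun p hp => ⟨hp₀ p hp, (cramer_part p A b (hp₀ p hp)).1,
      (cramer_part p A b (hp₀ p hp)).2⟩⟩
  · intro i
    set zi : Equiv.Perm (Fin n) → ℝ :=
      fun σ => ((Equiv.Perm.sign σ : ℤ) : ℝ) * ∏ j, (A.updateCol i b) j (σ j) with hzi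
    have hdetAi : detInf (A.updateCol i b) = FF Finset.univ zi := by rw [hzi]; rfl
    have hDAi : ∀ p : ℕ, (PhiM p (A.updateCol i b)).det
        = ∑ σ ∈ Finset.univ, zi σ ^ (2*p+1) := by
      intro p; rw [hzi]; exact det_PhiM p (A.updateCol i b)
    by_cases hSi : (Finset.univ.filter fun σ => xiF Finset.univ zi (zi σ) ≠ 0).Nonempty
    · obtain ⟨hvi_ne, Li, hLi, hTi⟩ := FF_spec Finset.univ zi hSi
      set rfun : ℕ → ℝ := fun p =>
        ((∑ σ ∈ Finset.univ, zi σ ^ (2*p+1)) / (FF Finset.univ zi)^(2*p+1))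
        / ((∑ σ ∈ Finset.univ, zA σ ^ (2*p+1)) / (FF Finset.univ zA)^(2*p+1)) with hrfun
      have hr : Filter.Tendsto rfun Filter.atTop (nhds (Li / LA)) := by
        rw [hrfun]; exact hTi.div hTA hLA.ne'
      have hLiLA : (0:ℝ) < Li / LA := div_pos hLi hLA
      have hrpos : ∀ᶠ p in Filter.atTop, 0 < rfun p :=
        hr.eventually (eventually_gt_nhds hLiLA)
      have hexp : Filter.Tendsto (fun p : ℕ => (2*(p:ℝ)+1)⁻¹) Filter.atTop (nhds 0) := by
        apply tendsto_inv_atTop_zero.comp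
        apply Filter.tendsto_atTop_add_const_right
        exact (tendsto_natCast_atTop_atTop (R := ℝ)).const_mul_atTop two_pos
      have hroot : Filter.Tendsto (fun p : ℕ => (rfun p) ^ ((2*(p:ℝ)+1)⁻¹))
          Filter.atTop (nhds 1) := by
        have := hr.rpow hexp (Or.inl hLiLA.ne')
        simpa using this
      have hmain : Filter.Tendsto (fun p : ℕ =>
          (FF Finset.univ zi / FF Finset.univ zA) * (rfun p) ^ ((2*(p:ℝ)+1)⁻¹))
          Filter.atTop (nhds (FF Finset.univ zi / FF Finset.univ zA)) := by
        simpa using tendsto_const_nhds.mul hroot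
      rw [hdetAi, hdetA]
      refine Filter.Tendsto.congr' ?_ hmain
      filter_upwards [hrpos, hDne] with p hrp hD
      have hSAne : (∑ σ ∈ Finset.univ, zA σ ^ (2*p+1)) ≠ 0 := by rw [← hDA p]; exact hD
      have hratio : (PhiM p (A.updateCol i b)).det / (PhiM p A).det
          = (FF Finset.univ zi / FF Finset.univ zA)^(2*p+1) * rfun p := by
        rw [hDAi p, hDA p, hrfun]
        field_simp
        rw [div_pow, mul_assoc, div_mul_cancel₀ _ (pow_ne_zero _ hvA_ne)]
      rw [hratio, oddRoot_mul, oddRoot_pow_self]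
      rw [oddRoot, if_pos hrp.le]
    · obtain ⟨hvi0, hsum0⟩ := FF_zero' _ zi hSi
      have heq : ∀ p : ℕ, oddRoot p ((PhiM p (A.updateCol i b)).det / (PhiM p A).det)
          = 0 := by
        intro p
        rw [hDAi p, hsum0 p, zero_div, oddRoot_zero]
      rw [funext heq, hdetAi, hvi0, zero_div]
      exact tendsto_const_nhds
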